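/- arXiv:1407.0189 — 2 statements merged into one kernel-verified Lean document; each statement's English description precedes it below -/
import Mathlib

section
/- Let n ≥ 1, let A be an IFM of order n, let λ ∈ [0,1] and set α = (1+λ)/2. Then for every m ≥ 2 and all r, s, the consecutive powers of A under the ∗ operation satisfy |(A^m)μ r s − (A^(m−1))μ r s| ≤ α^(m−2) and |(A^m)ν r s − (A^(m−1))ν r s| ≤ α^(m−2). -/
open Filter Topology

/-- Membership scalar operation of the convex combination of max-min and
maxarithmetic mean–minarithmetic mean: `x ⊛ y = λ·min(x,y) + (1-λ)·(x+y)/2`. -/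
noncomputable def starMu (lam x y : ℝ) : ℝ :=
  lam * min x y + (1 - lam) * ((x + y) / 2)

/-- Non-membership scalar operation:
`x ⊛' y = λ·max(x,y) + (1-λ)·(x+y)/2`. -/
noncomputable def starNu (lam x y : ℝ) : ℝ :=
  lam * max x y + (1 - lam) * ((x + y) / 2)

/-- `A` (given by membership part `Amu` and non-membership part `Anu`) is an
intuitionistic fuzzy matrix. -/
def IsIFM (n : ℕ) (Amu Anu : Fin n → Fin n → ℝ) : Prop :=
  ∀ i j, 0 ≤ Amu i j ∧ 0 ≤ Anu i j ∧ Amu i j + Anu i j ≤ 1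

/-- Powers of an IFM under the convex combination `∗` of the max-min and the
maxarithmetic mean–minarithmetic mean operations: `A^1 = A`,
`A^(k+1) = A^k ∗ A` with
`(X ∗ A)μ i j = max_t (Xμ i t ⊛ Aμ t j)` and
`(X ∗ A)ν i j = min_t (Xν i t ⊛' Aν t j)`.
(The value at `0` is irrelevant; it is set to `A`.) -/
noncomputable def sPow (n : ℕ) (lam : ℝ) (Amu Anu : Fin n → Fin n → ℝ) :
    ℕ → (Fin n → Fin n → ℝ) × (Fin n → Fin n → ℝ)
  | 0 => (Amu, Anu)
  | 1 => (Amu, Anu)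
  | m + 2 =>
    let X := sPow n lam Amu Anu (m + 1)
    (fun i j => ⨆ t : Fin n, starMu lam (X.1 i t) (Amu t j),
     fun i j => ⨅ t : Fin n, starNu lam (X.2 i t) (Anu t j))

lemma starMu_lip (lam x x' y : ℝ) (h0 : 0 ≤ lam) (h1 : lam ≤ 1) :
    |starMu lam x y - starMu lam x' y| ≤ (1 + lam) / 2 * |x - x'| := by
  have hmin : |min x y - min x' y| ≤ |x - x'| := by
    simpa using abs_min_sub_min_le_max x y x' y
  have heq : starMu lam x y - starMu lam x' y =
      lam * (min x y - min x' y) + (1 - lam) / 2 * (x - x') := by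
    unfold starMu; ring
  rw [heq]
  have h2 := abs_add_le (lam * (min x y - min x' y)) ((1 - lam) / 2 * (x - x'))
  rw [abs_mul, abs_mul, abs_of_nonneg h0, abs_of_nonneg (by linarith : (0:ℝ) ≤ (1 - lam)/2)] at h2
  nlinarith [abs_nonneg (x - x'), mul_le_mul_of_nonneg_left hmin h0]

lemma starNu_lip (lam x x' y : ℝ) (h0 : 0 ≤ lam) (h1 : lam ≤ 1) :
    |starNu lam x y - starNu lam x' y| ≤ (1 + lam) / 2 * |x - x'| := by
  have hmax : |max x y - max x' y| ≤ |x - x'| := by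
    simpa using abs_max_sub_max_le_max x y x' y
  have heq : starNu lam x y - starNu lam x' y =
      lam * (max x y - max x' y) + (1 - lam) / 2 * (x - x') := by
    unfold starNu; ring
  rw [heq]
  have h2 := abs_add_le (lam * (max x y - max x' y)) ((1 - lam) / 2 * (x - x'))
  rw [abs_mul, abs_mul, abs_of_nonneg h0, abs_of_nonneg (by linarith : (0:ℝ) ≤ (1 - lam)/2)] at h2
  nlinarith [abs_nonneg (x - x'), mul_le_mul_of_nonneg_left hmax h0]

lemma starMu_mem (lam x y : ℝ) (h0 : 0 ≤ lam) (h1 : lam ≤ 1)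
    (hx : x ∈ Set.Icc (0:ℝ) 1) (hy : y ∈ Set.Icc (0:ℝ) 1) :
    starMu lam x y ∈ Set.Icc (0:ℝ) 1 := by
  obtain ⟨hx0, hx1⟩ := hx; obtain ⟨hy0, hy1⟩ := hy
  unfold starMu
  constructor
  · have : (0:ℝ) ≤ min x y := le_min hx0 hy0
    nlinarith
  · have : min x y ≤ 1 := min_le_of_left_le hx1
    nlinarith

lemma starNu_mem (lam x y : ℝ) (h0 : 0 ≤ lam) (h1 : lam ≤ 1)
    (hx : x ∈ Set.Icc (0:ℝ) 1) (hy : y ∈ Set.Icc (0:ℝ) 1) :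
    starNu lam x y ∈ Set.Icc (0:ℝ) 1 := by
  obtain ⟨hx0, hx1⟩ := hx; obtain ⟨hy0, hy1⟩ := hy
  unfold starNu
  constructor
  · have : (0:ℝ) ≤ max x y := le_max_of_le_left hx0
    nlinarith
  · have : max x y ≤ 1 := max_le hx1 hy1
    nlinarith

lemma ciSup_abs_sub (n : ℕ) [Nonempty (Fin n)] (f g : Fin n → ℝ) (c : ℝ)
    (h : ∀ t, |f t - g t| ≤ c) : |(⨆ t, f t) - ⨆ t, g t| ≤ c := by
  rw [abs_sub_le_iff]
  constructor
  · rw [sub_le_iff_le_add]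
    refine ciSup_le fun t => ?_
    have h1 : f t ≤ g t + c := by have := (abs_sub_le_iff.1 (h t)).1; linarith
    exact h1.trans (by
      have := le_ciSup (Set.Finite.bddAbove (Set.finite_range g)) t
      linarith)
  · rw [sub_le_iff_le_add]
    refine ciSup_le fun t => ?_
    have h1 : g t ≤ f t + c := by have := (abs_sub_le_iff.1 (h t)).2; linarith
    exact h1.trans (by
      have := le_ciSup (Set.Finite.bddAbove (Set.finite_range f)) t
      linarith)

lemma ciInf_abs_sub (n : ℕ) [Nonempty (Fin n)] (f g : Fin n → ℝ) (c : ℝ)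
    (h : ∀ t, |f t - g t| ≤ c) : |(⨅ t, f t) - ⨅ t, g t| ≤ c := by
  rw [abs_sub_le_iff]
  constructor
  · have key : (⨅ t, f t) - c ≤ ⨅ t, g t := by
      refine le_ciInf fun t => ?_
      have h1 : f t ≤ g t + c := by have := (abs_sub_le_iff.1 (h t)).1; linarith
      have := ciInf_le (Set.Finite.bddBelow (Set.finite_range f)) t
      linarith
    linarith
  · have key : (⨅ t, g t) - c ≤ ⨅ t, f t := by
      refine le_ciInf fun t => ?_
      have h1 : g t ≤ f t + c := by have := (abs_sub_le_iff.1 (h t)).2; linarith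
      have := ciInf_le (Set.Finite.bddBelow (Set.finite_range g)) t
      linarith
    linarith



lemma sPow_mem (n : ℕ) [Nonempty (Fin n)] (Amu Anu : Fin n → Fin n → ℝ)
    (hA : IsIFM n Amu Anu) (lam : ℝ) (h0 : 0 ≤ lam) (h1 : lam ≤ 1) :
    ∀ m i j, (sPow n lam Amu Anu m).1 i j ∈ Set.Icc (0:ℝ) 1 ∧
      (sPow n lam Amu Anu m).2 i j ∈ Set.Icc (0:ℝ) 1 := by
  have hAmem : ∀ i j, Amu i j ∈ Set.Icc (0:ℝ) 1 ∧ Anu i j ∈ Set.Icc (0:ℝ) 1 := by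
    intro i j
    obtain ⟨a, b, c⟩ := hA i j
    exact ⟨⟨a, by linarith⟩, ⟨b, by linarith⟩⟩
  intro m
  induction m using Nat.strong_induction_on with
  | _ m ih =>
    match m with
    | 0 => intro i j; exact hAmem i j
    | 1 => intro i j; exact hAmem i j
    | k + 2 =>
      intro i j
      have ihk := ih (k + 1) (by omega)
      constructor
      · have he : (sPow n lam Amu Anu (k + 2)).1 i j =
            ⨆ t, starMu lam ((sPow n lam Amu Anu (k + 1)).1 i t) (Amu t j) := rfl
        rw [he]
        have hmem : ∀ t, starMu lam ((sPow n lam Amu Anu (k + 1)).1 i t) (Amu t j)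
            ∈ Set.Icc (0:ℝ) 1 := fun t =>
          starMu_mem lam _ _ h0 h1 ((ihk i t).1) ((hAmem t j).1)
        constructor
        · obtain ⟨t0⟩ := (inferInstance : Nonempty (Fin n))
          exact le_trans (hmem t0).1
            (le_ciSup (Set.Finite.bddAbove (Set.finite_range fun t =>
              starMu lam ((sPow n lam Amu Anu (k + 1)).1 i t) (Amu t j))) t0)
        · exact ciSup_le fun t => (hmem t).2
      · have he : (sPow n lam Amu Anu (k + 2)).2 i j =
            ⨅ t, starNu lam ((sPow n lam Amu Anu (k + 1)).2 i t) (Anu t j) := rfl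
        rw [he]
        have hmem : ∀ t, starNu lam ((sPow n lam Amu Anu (k + 1)).2 i t) (Anu t j)
            ∈ Set.Icc (0:ℝ) 1 := fun t =>
          starNu_mem lam _ _ h0 h1 ((ihk i t).2) ((hAmem t j).2)
        constructor
        · exact le_ciInf fun t => (hmem t).1
        · obtain ⟨t0⟩ := (inferInstance : Nonempty (Fin n))
          exact le_trans (ciInf_le (Set.Finite.bddBelow (Set.finite_range fun t =>
              starNu lam ((sPow n lam Amu Anu (k + 1)).2 i t) (Anu t j))) t0)
            (hmem t0).2

/-- Consecutive powers under the `∗` operation differ by at most `α^(m-2)`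
entrywise, where `α = (1+λ)/2`. -/
theorem sPow_consecutive_close (n : ℕ) (hn : 1 ≤ n)
    (Amu Anu : Fin n → Fin n → ℝ) (hA : IsIFM n Amu Anu)
    (lam : ℝ) (hlam : lam ∈ Set.Icc (0 : ℝ) 1)
    (alpha : ℝ) (halpha : alpha = (1 + lam) / 2)
    (m : ℕ) (hm : 2 ≤ m) (r s : Fin n) :
    |(sPow n lam Amu Anu m).1 r s - (sPow n lam Amu Anu (m - 1)).1 r s| ≤
        alpha ^ (m - 2) ∧
      |(sPow n lam Amu Anu m).2 r s - (sPow n lam Amu Anu (m - 1)).2 r s| ≤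
        alpha ^ (m - 2) := by
  have hne : Nonempty (Fin n) := ⟨⟨0, hn⟩⟩
  obtain ⟨h0, h1⟩ := hlam
  have halpha0 : 0 ≤ alpha := by rw [halpha]; linarith
  have hmem := sPow_mem n Amu Anu hA lam h0 h1
  have key : ∀ k, ∀ r s : Fin n,
      |(sPow n lam Amu Anu (k + 2)).1 r s - (sPow n lam Amu Anu (k + 1)).1 r s| ≤
        alpha ^ k ∧
      |(sPow n lam Amu Anu (k + 2)).2 r s - (sPow n lam Amu Anu (k + 1)).2 r s| ≤
        alpha ^ k := by
    intro k
    induction k with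
    | zero =>
      intro r s
      simp only [pow_zero]
      constructor
      · obtain ⟨⟨a, b⟩, -⟩ := hmem 2 r s
        obtain ⟨⟨c, d⟩, -⟩ := hmem 1 r s
        rw [abs_sub_le_iff]; constructor <;> linarith
      · obtain ⟨-, a, b⟩ := hmem 2 r s
        obtain ⟨-, c, d⟩ := hmem 1 r s
        rw [abs_sub_le_iff]; constructor <;> linarith
    | succ k ihk =>
      intro r s
      constructor
      · have he1 : (sPow n lam Amu Anu (k + 1 + 2)).1 r s =
            ⨆ t, starMu lam ((sPow n lam Amu Anu (k + 2)).1 r t) (Amu t s) := rfl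
        have he2 : (sPow n lam Amu Anu (k + 2)).1 r s =
            ⨆ t, starMu lam ((sPow n lam Amu Anu (k + 1)).1 r t) (Amu t s) := rfl
        rw [he1, he2]
        refine ciSup_abs_sub n _ _ _ fun t => ?_
        have hlip := starMu_lip lam ((sPow n lam Amu Anu (k + 2)).1 r t)
          ((sPow n lam Amu Anu (k + 1)).1 r t) (Amu t s) h0 h1
        have hih := (ihk r t).1
        calc _ ≤ (1 + lam) / 2 * |(sPow n lam Amu Anu (k + 2)).1 r t -
                (sPow n lam Amu Anu (k + 1)).1 r t| := hlip
          _ ≤ alpha * alpha ^ k := by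
              rw [halpha]
              exact mul_le_mul_of_nonneg_left (halpha ▸ hih) (by linarith)
          _ = alpha ^ (k + 1) := (pow_succ' alpha k).symm
      · have he1 : (sPow n lam Amu Anu (k + 1 + 2)).2 r s =
            ⨅ t, starNu lam ((sPow n lam Amu Anu (k + 2)).2 r t) (Anu t s) := rfl
        have he2 : (sPow n lam Amu Anu (k + 2)).2 r s =
            ⨅ t, starNu lam ((sPow n lam Amu Anu (k + 1)).2 r t) (Anu t s) := rfl
        rw [he1, he2]
        refine ciInf_abs_sub n _ _ _ fun t => ?_
        have hlip := starNu_lip lam ((sPow n lam Amu Anu (k + 2)).2 r t)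
          ((sPow n lam Amu Anu (k + 1)).2 r t) (Anu t s) h0 h1
        have hih := (ihk r t).2
        calc _ ≤ (1 + lam) / 2 * |(sPow n lam Amu Anu (k + 2)).2 r t -
                (sPow n lam Amu Anu (k + 1)).2 r t| := hlip
          _ ≤ alpha * alpha ^ k := by
              rw [halpha]
              exact mul_le_mul_of_nonneg_left (halpha ▸ hih) (by linarith)
          _ = alpha ^ (k + 1) := (pow_succ' alpha k).symm
  obtain ⟨k, rfl⟩ := Nat.exists_eq_add_of_le' hm
  exact key k r s
end

section
/- Let n ≥ 1, let A be an IFM of order n and let λ ∈ (0,1). For an index j, one has (A^m)μ s j → 1 and (A^m)ν s j → 0 as m → ∞ for every index s (powers taken with the ∗ operation; i.e., all entries in the j-th column of the limit matrix are ⟨1,0⟩) if and only if there is a critical path from a critical vertex to j. -/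
open Filter Topology

/-- The edge `(i,j)` is critical: `Aμ i j = 1` and `Aν i j = 0`. -/
def CritEdge (n : ℕ) (Amu Anu : Fin n → Fin n → ℝ) (i j : Fin n) : Prop :=
  Amu i j = 1 ∧ Anu i j = 0

/-- `v` is a critical vertex: it lies on some critical circuit. -/
def CritVertex (n : ℕ) (Amu Anu : Fin n → Fin n → ℝ) (v : Fin n) : Prop :=
  ∃ h : ℕ, 1 ≤ h ∧ ∃ Q : Fin (h + 1) → Fin n,
    Q 0 = Q (Fin.last h) ∧
    (∀ k : Fin h, CritEdge n Amu Anu (Q k.castSucc) (Q k.succ)) ∧ ∃ k, Q k = v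

/-- There is a critical path (of some length `m ≥ 1`) from a critical vertex to `j`. -/
def CritPathTo (n : ℕ) (Amu Anu : Fin n → Fin n → ℝ) (j : Fin n) : Prop :=
  ∃ m : ℕ, 1 ≤ m ∧ ∃ P : Fin (m + 1) → Fin n,
    CritVertex n Amu Anu (P 0) ∧ P (Fin.last m) = j ∧
    ∀ k : Fin m, CritEdge n Amu Anu (P k.castSucc) (P k.succ)

namespace IFMAux

variable {n : ℕ}

lemma amu_le_one {Amu Anu : Fin n → Fin n → ℝ} (hA : IsIFM n Amu Anu) (i k : Fin n) :
    Amu i k ≤ 1 := by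
  have h := hA i k; linarith [h.1, h.2.1, h.2.2]

lemma crit_anu {Amu Anu : Fin n → Fin n → ℝ} (hA : IsIFM n Amu Anu) {i k : Fin n}
    (h : Amu i k = 1) : Anu i k = 0 := by
  have h2 := hA i k
  have : Anu i k ≤ 0 := by linarith [h2.2.2]
  linarith [h2.2.1]

lemma starMu_nonneg {lam x y : ℝ} (h0 : 0 < lam) (h1 : lam < 1) (hx : 0 ≤ x) (hy : 0 ≤ y) :
    0 ≤ starMu lam x y := by
  have hm : 0 ≤ min x y := le_min hx hy
  unfold starMu; nlinarith

lemma starMu_le_one {lam x y : ℝ} (h0 : 0 < lam) (h1 : lam < 1) (hx : x ≤ 1) (hy : y ≤ 1) :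
    starMu lam x y ≤ 1 := by
  have hm : min x y ≤ 1 := min_le_of_left_le hx
  unfold starMu; nlinarith

lemma one_sub_starMu_ge_left {lam x y : ℝ} (h0 : 0 < lam) (h1 : lam < 1) (hy : y ≤ 1) :
    ((1 + lam) / 2) * (1 - x) ≤ 1 - starMu lam x y := by
  have hm : min x y ≤ x := min_le_left _ _
  unfold starMu; nlinarith

lemma one_sub_starMu_ge_right {lam x y : ℝ} (h0 : 0 < lam) (h1 : lam < 1) (hx : x ≤ 1)
    (hy : y ≤ 1) :
    ((1 - lam) / 2) * (1 - y) ≤ 1 - starMu lam x y := by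
  have hm : min x y ≤ y := min_le_right _ _
  unfold starMu; nlinarith

lemma starMu_one {lam x : ℝ} (hx : x ≤ 1) : starMu lam x 1 = 1 - ((1 + lam) / 2) * (1 - x) := by
  unfold starMu; rw [min_eq_left hx]; ring

lemma starNu_zero {lam y : ℝ} (hy : 0 ≤ y) : starNu lam y 0 = ((1 + lam) / 2) * y := by
  unfold starNu; rw [max_eq_left hy]; ring

lemma starNu_nonneg {lam y b : ℝ} (h0 : 0 < lam) (h1 : lam < 1) (hy : 0 ≤ y) (hb : 0 ≤ b) :
    0 ≤ starNu lam y b := by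
  have := le_max_left y b
  unfold starNu; nlinarith

lemma starNu_le_one {lam y b : ℝ} (h0 : 0 < lam) (h1 : lam < 1) (hy : y ≤ 1) (hb : b ≤ 1) :
    starNu lam y b ≤ 1 := by
  have : max y b ≤ 1 := max_le hy hb
  unfold starNu; nlinarith

lemma sPow_succ (n : ℕ) (lam : ℝ) (Amu Anu : Fin n → Fin n → ℝ) (m : ℕ) (hm : 1 ≤ m) :
    (sPow n lam Amu Anu (m + 1)).1 =
      (fun i j => ⨆ t : Fin n, starMu lam ((sPow n lam Amu Anu m).1 i t) (Amu t j)) ∧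
    (sPow n lam Amu Anu (m + 1)).2 =
      (fun i j => ⨅ t : Fin n, starNu lam ((sPow n lam Amu Anu m).2 i t) (Anu t j)) := by
  obtain ⟨k, rfl⟩ : ∃ k, m = k + 1 := ⟨m - 1, by omega⟩
  exact ⟨rfl, rfl⟩

lemma sPow_bounds (hn : 1 ≤ n) {lam : ℝ} (h0 : 0 < lam) (h1 : lam < 1)
    {Amu Anu : Fin n → Fin n → ℝ} (hA : IsIFM n Amu Anu) :
    ∀ m (i k : Fin n),
      (0 ≤ (sPow n lam Amu Anu m).1 i k ∧ (sPow n lam Amu Anu m).1 i k ≤ 1) ∧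
      (0 ≤ (sPow n lam Amu Anu m).2 i k ∧ (sPow n lam Amu Anu m).2 i k ≤ 1) := by
  haveI : Nonempty (Fin n) := ⟨⟨0, hn⟩⟩
  intro m
  induction m with
  | zero =>
    intro i k
    have h := hA i k
    simp only [sPow]
    exact ⟨⟨h.1, by linarith [h.2.1, h.2.2]⟩, ⟨h.2.1, by linarith [h.1, h.2.2]⟩⟩
  | succ m ih =>
    intro i k
    rcases Nat.eq_zero_or_pos m with rfl | hm
    · have h := hA i k
      simp only [show (0:ℕ)+1 = 1 from rfl, sPow]
      exact ⟨⟨h.1, by linarith [h.2.1, h.2.2]⟩, ⟨h.2.1, by linarith [h.1, h.2.2]⟩⟩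
    · obtain ⟨e1, e2⟩ := sPow_succ n lam Amu Anu m hm
      refine ⟨⟨?_, ?_⟩, ⟨?_, ?_⟩⟩
      · simp only [e1]
        exact le_ciSup_of_le (Set.finite_range _).bddAbove i
          (starMu_nonneg h0 h1 (ih i i).1.1 (hA i k).1)
      · simp only [e1]
        exact ciSup_le fun t => starMu_le_one h0 h1 (ih i t).1.2 (amu_le_one hA t k)
      · simp only [e2]
        exact le_ciInf fun t => starNu_nonneg h0 h1 (ih i t).2.1 (hA t k).2.1
      · simp only [e2]
        exact ciInf_le_of_le (Set.finite_range _).bddBelow i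
          (starNu_le_one h0 h1 (ih i i).2.2 (by linarith [(hA i k).1, (hA i k).2.2]))

lemma mu_step_le {lam : ℝ} {Amu Anu : Fin n → Fin n → ℝ} (m : ℕ) (hm : 1 ≤ m)
    (s j t : Fin n) :
    starMu lam ((sPow n lam Amu Anu m).1 s t) (Amu t j)
      ≤ (sPow n lam Amu Anu (m + 1)).1 s j := by
  simp only [(sPow_succ n lam Amu Anu m hm).1]
  exact le_ciSup (f := fun t => starMu lam ((sPow n lam Amu Anu m).1 s t) (Amu t j))
    (Set.finite_range _).bddAbove t

lemma mu_step_ub (hn : 1 ≤ n) {lam : ℝ} {Amu Anu : Fin n → Fin n → ℝ} (m : ℕ) (hm : 1 ≤ m)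
    (s j : Fin n) (b : ℝ)
    (h : ∀ t, starMu lam ((sPow n lam Amu Anu m).1 s t) (Amu t j) ≤ b) :
    (sPow n lam Amu Anu (m + 1)).1 s j ≤ b := by
  haveI : Nonempty (Fin n) := ⟨⟨0, hn⟩⟩
  simp only [(sPow_succ n lam Amu Anu m hm).1]
  exact ciSup_le h

lemma nu_step_le {lam : ℝ} {Amu Anu : Fin n → Fin n → ℝ} (m : ℕ) (hm : 1 ≤ m)
    (s j t : Fin n) :
    (sPow n lam Amu Anu (m + 1)).2 s j
      ≤ starNu lam ((sPow n lam Amu Anu m).2 s t) (Anu t j) := by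
  simp only [(sPow_succ n lam Amu Anu m hm).2]
  exact ciInf_le (f := fun t => starNu lam ((sPow n lam Amu Anu m).2 s t) (Anu t j))
    (Set.finite_range _).bddBelow t

lemma trav (hn : 1 ≤ n) {lam : ℝ} (h0 : 0 < lam) (h1 : lam < 1)
    {Amu Anu : Fin n → Fin n → ℝ} (hA : IsIFM n Amu Anu)
    (ℓ : ℕ) (C : ℕ → Fin n)
    (hC : ∀ l < ℓ, CritEdge n Amu Anu (C l) (C (l + 1)))
    (q : ℕ) (hq : 1 ≤ q) (s : Fin n) :
    1 - (sPow n lam Amu Anu (q + ℓ)).1 s (C ℓ)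
        ≤ ((1 + lam) / 2) ^ ℓ * (1 - (sPow n lam Amu Anu q).1 s (C 0)) ∧
    (sPow n lam Amu Anu (q + ℓ)).2 s (C ℓ)
        ≤ ((1 + lam) / 2) ^ ℓ * (sPow n lam Amu Anu q).2 s (C 0) := by
  induction ℓ with
  | zero => simp
  | succ ℓ ih =>
    obtain ⟨ihμ, ihν⟩ := ih (fun l hl => hC l (by omega))
    have hb := sPow_bounds hn h0 h1 hA
    have hr0 : (0:ℝ) ≤ (1 + lam) / 2 := by linarith
    have h2 : starMu lam ((sPow n lam Amu Anu (q + ℓ)).1 s (C ℓ)) (Amu (C ℓ) (C (ℓ + 1)))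
        ≤ (sPow n lam Amu Anu (q + ℓ + 1)).1 s (C (ℓ + 1)) :=
      mu_step_le (q + ℓ) (by omega) s _ (C ℓ)
    rw [(hC ℓ (by omega)).1, starMu_one (hb (q + ℓ) s (C ℓ)).1.2] at h2
    have h3 := nu_step_le (m := q + ℓ) (lam := lam) (Amu := Amu) (Anu := Anu)
      (by omega) s (C (ℓ + 1)) (C ℓ)
    rw [(hC ℓ (by omega)).2, starNu_zero (hb (q + ℓ) s (C ℓ)).2.1] at h3
    constructor
    · have h4 : 1 - (sPow n lam Amu Anu (q + ℓ + 1)).1 s (C (ℓ + 1))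
          ≤ ((1 + lam) / 2) * (1 - (sPow n lam Amu Anu (q + ℓ)).1 s (C ℓ)) := by linarith
      calc 1 - (sPow n lam Amu Anu (q + (ℓ + 1))).1 s (C (ℓ + 1))
          ≤ ((1 + lam) / 2) * (1 - (sPow n lam Amu Anu (q + ℓ)).1 s (C ℓ)) := h4
        _ ≤ ((1 + lam) / 2) * (((1 + lam) / 2) ^ ℓ * (1 - (sPow n lam Amu Anu q).1 s (C 0))) :=
            mul_le_mul_of_nonneg_left ihμ hr0
        _ = ((1 + lam) / 2) ^ (ℓ + 1) * (1 - (sPow n lam Amu Anu q).1 s (C 0)) := by ring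
    · calc (sPow n lam Amu Anu (q + (ℓ + 1))).2 s (C (ℓ + 1))
          ≤ ((1 + lam) / 2) * (sPow n lam Amu Anu (q + ℓ)).2 s (C ℓ) := h3
        _ ≤ ((1 + lam) / 2) * (((1 + lam) / 2) ^ ℓ * (sPow n lam Amu Anu q).2 s (C 0)) :=
            mul_le_mul_of_nonneg_left ihν hr0
        _ = ((1 + lam) / 2) ^ (ℓ + 1) * (sPow n lam Amu Anu q).2 s (C 0) := by ring


lemma critPathTo_of_natPath (hn : 1 ≤ n) (Amu Anu : Fin n → Fin n → ℝ) (hA : IsIFM n Amu Anu)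
    (j : Fin n) (P : ℕ → Fin n) (hPn : P n = j)
    (hcrit : ∀ l < n, Amu (P l) (P (l + 1)) = 1) : CritPathTo n Amu Anu j := by
  have hedge : ∀ l < n, CritEdge n Amu Anu (P l) (P (l + 1)) := fun l hl =>
    ⟨hcrit l hl, crit_anu hA (hcrit l hl)⟩
  obtain ⟨a, b, hab, hbn, hPab⟩ : ∃ a b : ℕ, a < b ∧ b ≤ n ∧ P a = P b := by
    obtain ⟨x, y, hne, he⟩ :=
      Fintype.exists_ne_map_eq_of_card_lt (fun i : Fin (n + 1) => P i.val) (by simp)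
    rcases lt_or_gt_of_ne hne with h | h
    · exact ⟨x.val, y.val, h, y.is_le, he⟩
    · exact ⟨y.val, x.val, h, x.is_le, he.symm⟩
  have hv : CritVertex n Amu Anu (P b) := by
    refine ⟨b - a, by omega, fun k => P (a + k.val), ?_, ?_, ⟨0, ?_⟩⟩
    · simp only [Fin.val_zero, Fin.val_last, Nat.add_zero]
      rw [show a + (b - a) = b from by omega]
      exact hPab
    · intro k
      have hk := k.isLt
      have := hedge (a + k.val) (by omega)
      simpa only [Fin.coe_castSucc, Fin.val_succ, Nat.add_assoc] using this
    · simp only [Fin.val_zero, Nat.add_zero]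
      exact hPab
  set a0 : ℕ := if b < n then b else a with ha0
  have ha0n : a0 < n := by rw [ha0]; split_ifs with hcas <;> omega
  have hPa0 : P a0 = P b := by
    rw [ha0]; split_ifs with hcas
    · rfl
    · exact hPab
  refine ⟨n - a0, by omega, fun k => P (a0 + k.val), ?_, ?_, ?_⟩
  · show CritVertex n Amu Anu (P (a0 + (0 : Fin (n - a0 + 1)).val))
    simp only [Fin.val_zero, Nat.add_zero]
    rw [hPa0]; exact hv
  · simp only [Fin.val_last]
    rw [show a0 + (n - a0) = n from by omega]
    exact hPn
  · intro k
    have hk := k.isLt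
    have := hedge (a0 + k.val) (by omega)
    simpa only [Fin.coe_castSucc, Fin.val_succ, Nat.add_assoc] using this

end IFMAux

/-- Theorem 4.6: all entries of the `j`-th column of the limit of the powers of
`A` under the `∗` operation are `⟨1,0⟩` if and only if there is a critical path
from a critical vertex to `j`. -/
theorem sPow_column_one_iff_critPath (n : ℕ) (hn : 1 ≤ n)
    (Amu Anu : Fin n → Fin n → ℝ) (hA : IsIFM n Amu Anu)
    (lam : ℝ) (hlam : lam ∈ Set.Ioo (0 : ℝ) 1) (j : Fin n) :
    (∀ s : Fin n,
        Tendsto (fun m => (sPow n lam Amu Anu m).1 s j) atTop (𝓝 1) ∧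
        Tendsto (fun m => (sPow n lam Amu Anu m).2 s j) atTop (𝓝 0)) ↔
      CritPathTo n Amu Anu j := by

  classical
  obtain ⟨hl0, hl1⟩ := hlam
  haveI : Nonempty (Fin n) := ⟨⟨0, hn⟩⟩
  have hb := IFMAux.sPow_bounds hn hl0 hl1 hA
  have hr0 : (0:ℝ) < (1 + lam) / 2 := by linarith
  have hr1 : (1 + lam) / 2 < 1 := by linarith
  constructor
  · -- forward direction
    intro H
    by_contra hcp
    set δ : ℝ := Finset.univ.inf' Finset.univ_nonempty
      (fun pr : Fin n × Fin n => if Amu pr.1 pr.2 = 1 then (1:ℝ) else 1 - Amu pr.1 pr.2)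
      with hδdef
    have hδpos : 0 < δ := by
      rw [hδdef, Finset.lt_inf'_iff]
      intro pr _
      split_ifs with hc
      · norm_num
      · have h1 := IFMAux.amu_le_one hA pr.1 pr.2
        have h2 : Amu pr.1 pr.2 < 1 := lt_of_le_of_ne h1 hc
        linarith
    have hδle : ∀ a b : Fin n, Amu a b ≠ 1 → δ ≤ 1 - Amu a b := by
      intro a b hne
      rw [hδdef]
      exact Finset.inf'_le_of_le
        (f := fun pr : Fin n × Fin n => if Amu pr.1 pr.2 = 1 then (1:ℝ) else 1 - Amu pr.1 pr.2)
        (Finset.mem_univ (a, b)) (le_of_eq (if_neg hne))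
    have key : ∀ k, 1 ≤ k → ∀ i : Fin n,
        (∀ P : ℕ → Fin n, P k = i → ¬ ∀ l < k, Amu (P l) (P (l + 1)) = 1) →
        ∀ m, k ≤ m → ∀ s, (sPow n lam Amu Anu m).1 s i
          ≤ 1 - ((1 - lam) / 2) * δ * ((1 + lam) / 2) ^ (k - 1) := by
      intro k
      induction k with
      | zero => omega
      | succ k ihk =>
        intro _ i hi m hm s
        have hc0 : (0:ℝ) < (1 - lam) / 2 := by linarith
        rcases Nat.eq_zero_or_pos k with rfl | hk1
        · -- base case k+1 = 1
          have hedge : ∀ t, Amu t i ≠ 1 := by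
            intro t ht
            refine hi (fun l => if l = 0 then t else i) (by norm_num) ?_
            intro l hl
            interval_cases l
            simpa using ht
          rcases Nat.lt_or_ge m 2 with hm2 | hm2
          · have hme : m = 1 := by omega
            subst hme
            have h1 : (sPow n lam Amu Anu 1).1 s i = Amu s i := rfl
            rw [h1]
            have h2 := hδle s i (hedge s)
            simp only [Nat.sub_self, pow_zero, mul_one]
            nlinarith
          · obtain ⟨m', rfl⟩ : ∃ m', m = m' + 1 := ⟨m - 1, by omega⟩
            apply IFMAux.mu_step_ub hn m' (by omega) s i
            intro t
            have h3 := IFMAux.one_sub_starMu_ge_right hl0 hl1 (hb m' s t).1.2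
              (IFMAux.amu_le_one hA t i)
            have h4 := hδle t i (hedge t)
            simp only [Nat.sub_self, pow_zero, mul_one]
            nlinarith
        · -- inductive case
          obtain ⟨m', rfl⟩ : ∃ m', m = m' + 1 := ⟨m - 1, by omega⟩
          have hm' : k ≤ m' := by omega
          apply IFMAux.mu_step_ub hn m' (by omega) s i
          intro t
          by_cases hcr : Amu t i = 1
          · have hnt : ∀ P : ℕ → Fin n, P k = t → ¬ ∀ l < k, Amu (P l) (P (l + 1)) = 1 := by
              intro P hPk hPcrit
              refine hi (fun l => if l = k + 1 then i else P l) (by simp) ?_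
              intro l hl
              rcases Nat.lt_or_ge l k with h' | h'
              · have e1 : l ≠ k + 1 := by omega
                have e2 : l + 1 ≠ k + 1 := by omega
                simp only [if_neg e1, if_neg e2]
                exact hPcrit l h'
              · have hlk : l = k := by omega
                subst hlk
                simp only [if_neg (show l ≠ l + 1 by omega), if_pos rfl, hPk]
                exact hcr
            have hIH := ihk hk1 t hnt m' hm' s
            rw [hcr, IFMAux.starMu_one (hb m' s t).1.2]
            have h5 : ((1 - lam) / 2) * δ * ((1 + lam) / 2) ^ (k - 1)
                ≤ 1 - (sPow n lam Amu Anu m').1 s t := by linarith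
            have h6 := mul_le_mul_of_nonneg_left h5 hr0.le
            have hk' : k - 1 + 1 = k := by omega
            have h7 : ((1 + lam) / 2) ^ k = ((1 + lam) / 2) ^ (k - 1) * ((1 + lam) / 2) := by
              conv_lhs => rw [← hk']
              rw [pow_succ]
            have h7' : ((1 - lam) / 2) * δ * ((1 + lam) / 2) ^ k
                = ((1 + lam) / 2) * (((1 - lam) / 2) * δ * ((1 + lam) / 2) ^ (k - 1)) := by
              rw [h7]; ring
            simp only [Nat.add_sub_cancel]
            linarith
          · have h3 := IFMAux.one_sub_starMu_ge_right hl0 hl1 (hb m' s t).1.2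
              (IFMAux.amu_le_one hA t i)
            have h4 := hδle t i hcr
            have h8 : ((1 + lam) / 2) ^ k ≤ 1 := pow_le_one₀ hr0.le hr1.le
            have h9 : ((1 - lam) / 2) * δ ≤ ((1 - lam) / 2) * (1 - Amu t i) :=
              mul_le_mul_of_nonneg_left h4 hc0.le
            have h10 : ((1 - lam) / 2) * δ * ((1 + lam) / 2) ^ k ≤ ((1 - lam) / 2) * δ * 1 :=
              mul_le_mul_of_nonneg_left h8 (mul_nonneg hc0.le hδpos.le)
            simp only [Nat.add_sub_cancel]
            linarith
    have hnop : ∀ P : ℕ → Fin n, P n = j → ¬ ∀ l < n, Amu (P l) (P (l + 1)) = 1 :=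
      fun P hP hc => hcp (IFMAux.critPathTo_of_natPath hn Amu Anu hA j P hP hc)
    have hfin := key n hn j hnop
    have hεpos : 0 < ((1 - lam) / 2) * δ * ((1 + lam) / 2) ^ (n - 1) :=
      mul_pos (mul_pos (by linarith) hδpos) (pow_pos hr0 _)
    have hev := (H j).1.eventually (eventually_gt_nhds
      (show (1:ℝ) - ((1 - lam) / 2) * δ * ((1 + lam) / 2) ^ (n - 1) < 1 by linarith))
    obtain ⟨m, hm1, hm2⟩ := (hev.and (eventually_ge_atTop n)).exists
    have := hfin m hm2 j
    linarith
  · -- reverse direction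
    rintro ⟨p, hp, P, hv, hPj, hPe⟩
    obtain ⟨h, hh, Q, hQ0, hQe, k0, hk0⟩ := hv
    have hmod : ∀ t : ℕ, t % h < h + 1 := fun t => by
      have := Nat.mod_lt t (show 0 < h by omega); omega
    set C : ℕ → Fin n := fun t => Q ⟨t % h, hmod t⟩ with hC
    have hCe : ∀ t : ℕ, CritEdge n Amu Anu (C t) (C (t + 1)) := by
      intro t
      have hlt : t % h < h := Nat.mod_lt t (by omega)
      rcases Nat.lt_or_ge (t % h + 1) h with hc1 | hc1
      · have e : (t + 1) % h = t % h + 1 := by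
          rw [← Nat.mod_add_mod]
          exact Nat.mod_eq_of_lt (by omega)
        have e2 : C (t + 1) = Q (Fin.succ ⟨t % h, hlt⟩) := by
          rw [hC]; exact congrArg Q (Fin.ext (by simp [e]))
        have e3 : C t = Q (Fin.castSucc ⟨t % h, hlt⟩) := rfl
        rw [e2, e3]
        exact hQe ⟨t % h, hlt⟩
      · have e0 : t % h = h - 1 := by omega
        have e : (t + 1) % h = 0 := by
          rw [← Nat.mod_add_mod, e0, show h - 1 + 1 = h from by omega]
          exact Nat.mod_self h
        have e2 : C (t + 1) = Q 0 := by
          rw [hC]; exact congrArg Q (Fin.ext (by simp [e]))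
        have e3 : C t = Q (Fin.castSucc ⟨h - 1, by omega⟩) := by
          rw [hC]; exact congrArg Q (Fin.ext (by simp [e0]))
        have e4 : (Fin.succ (⟨h - 1, by omega⟩ : Fin h)) = Fin.last h :=
          Fin.ext (by simp; omega)
        rw [e2, e3, hQ0, ← e4]
        exact hQe ⟨h - 1, by omega⟩
    have hCper : ∀ t k : ℕ, C (t + h * k) = C t := by
      intro t k
      rw [hC]
      exact congrArg Q (Fin.ext (by simp [Nat.add_mul_mod_self_left]))
    have he0 : k0.val % h < h := Nat.mod_lt _ (by omega)
    have hCv : C (k0.val % h) = P 0 := by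
      rcases Nat.lt_or_ge k0.val h with hk | hk
      · rw [hC, ← hk0]
        exact congrArg Q (Fin.ext (by
          simp only
          rw [Nat.mod_eq_of_lt he0]
          exact Nat.mod_eq_of_lt hk))
      · have hk' : k0.val = h := by have := k0.isLt; omega
        have hQk0 : Q k0 = Q (Fin.last h) := congrArg Q (Fin.ext (by simp [hk']))
        rw [hC, ← hk0, hQk0, ← hQ0]
        exact congrArg Q (Fin.ext (by
          simp only [Fin.val_zero]
          rw [Nat.mod_eq_of_lt he0, hk']
          exact Nat.mod_self h))
    have hminlt : ∀ t : ℕ, min t p < p + 1 := fun t => by omega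
    set Pn' : ℕ → Fin n := fun t => P ⟨min t p, hminlt t⟩ with hPn'
    have hP0 : Pn' 0 = P 0 := congrArg P (Fin.ext (by simp))
    have hPp : Pn' p = j := by
      rw [hPn', ← hPj]
      exact congrArg P (Fin.ext (by simp))
    have hPe' : ∀ l < p, CritEdge n Amu Anu (Pn' l) (Pn' (l + 1)) := by
      intro l hl
      have e1 : Pn' l = P (Fin.castSucc ⟨l, hl⟩) := congrArg P (Fin.ext (by simp; omega))
      have e2 : Pn' (l + 1) = P (Fin.succ ⟨l, hl⟩) := congrArg P (Fin.ext (by simp; omega))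
      rw [e1, e2]
      exact hPe ⟨l, hl⟩
    have key : ∀ m, p + 1 ≤ m → ∀ s : Fin n,
        1 - (sPow n lam Amu Anu m).1 s j ≤ ((1 + lam) / 2) ^ (m - h) ∧
        (sPow n lam Amu Anu m).2 s j ≤ ((1 + lam) / 2) ^ (m - h) := by
      intro m hm s
      obtain ⟨K, R, hdm, hRlt⟩ : ∃ K R, h * K + R = m - p - 1 ∧ R < h :=
        ⟨(m - p - 1) / h, (m - p - 1) % h, Nat.div_add_mod _ _, Nat.mod_lt _ (by omega)⟩
      set q : ℕ := m - p - h * K with hqdef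
      have hq1 : 1 ≤ q := by omega
      have hqh : q ≤ h := by omega
      have hsum : q + h * K + p = m := by omega
      have hD : ∀ l < h * K,
          CritEdge n Amu Anu ((fun t => C (k0.val % h + t)) l)
            ((fun t => C (k0.val % h + t)) (l + 1)) := by
        intro l _
        exact hCe (k0.val % h + l)
      obtain ⟨c1, c2⟩ := IFMAux.trav hn hl0 hl1 hA (h * K)
        (fun t => C (k0.val % h + t)) hD q hq1 s
      have hCv1 : C (k0.val % h + h * K) = P 0 := by rw [hCper]; exact hCv
      have hCv0 : C (k0.val % h + 0) = P 0 := by rw [Nat.add_zero]; exact hCv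
      simp only [hCv1, hCv0] at c1 c2
      obtain ⟨d1, d2⟩ := IFMAux.trav hn hl0 hl1 hA p Pn' hPe' (q + h * K) (by omega) s
      rw [hPp, hP0] at d1 d2
      have hb1 : 1 - (sPow n lam Amu Anu q).1 s (P 0) ≤ 1 := by
        linarith [(hb q s (P 0)).1.1]
      have hb2 : (sPow n lam Amu Anu q).2 s (P 0) ≤ 1 := (hb q s (P 0)).2.2
      have hrp : (0:ℝ) ≤ ((1 + lam) / 2) ^ (h * K) := pow_nonneg hr0.le _
      have hrp2 : (0:ℝ) ≤ ((1 + lam) / 2) ^ p := pow_nonneg hr0.le _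
      have c1' : 1 - (sPow n lam Amu Anu (q + h * K)).1 s (P 0) ≤ ((1 + lam) / 2) ^ (h * K) := by
        calc 1 - (sPow n lam Amu Anu (q + h * K)).1 s (P 0)
            ≤ ((1 + lam) / 2) ^ (h * K) * (1 - (sPow n lam Amu Anu q).1 s (P 0)) := c1
          _ ≤ ((1 + lam) / 2) ^ (h * K) * 1 := mul_le_mul_of_nonneg_left hb1 hrp
          _ = ((1 + lam) / 2) ^ (h * K) := mul_one _
      have c2' : (sPow n lam Amu Anu (q + h * K)).2 s (P 0) ≤ ((1 + lam) / 2) ^ (h * K) := by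
        calc (sPow n lam Amu Anu (q + h * K)).2 s (P 0)
            ≤ ((1 + lam) / 2) ^ (h * K) * (sPow n lam Amu Anu q).2 s (P 0) := c2
          _ ≤ ((1 + lam) / 2) ^ (h * K) * 1 := mul_le_mul_of_nonneg_left hb2 hrp
          _ = ((1 + lam) / 2) ^ (h * K) := mul_one _
      have hle : ((1 + lam) / 2) ^ (p + h * K) ≤ ((1 + lam) / 2) ^ (m - h) :=
        pow_le_pow_of_le_one hr0.le hr1.le (by omega)
      have final1 : 1 - (sPow n lam Amu Anu (q + h * K + p)).1 s j
          ≤ ((1 + lam) / 2) ^ (m - h) := by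
        calc 1 - (sPow n lam Amu Anu (q + h * K + p)).1 s j
            ≤ ((1 + lam) / 2) ^ p * (1 - (sPow n lam Amu Anu (q + h * K)).1 s (P 0)) := d1
          _ ≤ ((1 + lam) / 2) ^ p * ((1 + lam) / 2) ^ (h * K) :=
              mul_le_mul_of_nonneg_left c1' hrp2
          _ = ((1 + lam) / 2) ^ (p + h * K) := (pow_add _ _ _).symm
          _ ≤ ((1 + lam) / 2) ^ (m - h) := hle
      have final2 : (sPow n lam Amu Anu (q + h * K + p)).2 s j
          ≤ ((1 + lam) / 2) ^ (m - h) := by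
        calc (sPow n lam Amu Anu (q + h * K + p)).2 s j
            ≤ ((1 + lam) / 2) ^ p * (sPow n lam Amu Anu (q + h * K)).2 s (P 0) := d2
          _ ≤ ((1 + lam) / 2) ^ p * ((1 + lam) / 2) ^ (h * K) :=
              mul_le_mul_of_nonneg_left c2' hrp2
          _ = ((1 + lam) / 2) ^ (p + h * K) := (pow_add _ _ _).symm
          _ ≤ ((1 + lam) / 2) ^ (m - h) := hle
      rw [hsum] at final1 final2
      exact ⟨final1, final2⟩
    have hrt : Tendsto (fun m : ℕ => ((1 + lam) / 2) ^ (m - h)) atTop (𝓝 0) :=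
      (tendsto_pow_atTop_nhds_zero_of_lt_one hr0.le hr1).comp (tendsto_sub_atTop_nat h)
    intro s
    constructor
    · apply tendsto_of_tendsto_of_tendsto_of_le_of_le'
        (g := fun m : ℕ => 1 - ((1 + lam) / 2) ^ (m - h)) (h := fun _ : ℕ => (1:ℝ))
      · simpa using tendsto_const_nhds.sub hrt
      · exact tendsto_const_nhds
      · filter_upwards [eventually_ge_atTop (p + 1)] with m hm
        linarith [(key m hm s).1]
      · exact Eventually.of_forall fun m => (hb m s j).1.2
    · apply tendsto_of_tendsto_of_tendsto_of_le_of_le'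
        (g := fun _ : ℕ => (0:ℝ)) (h := fun m : ℕ => ((1 + lam) / 2) ^ (m - h))
        tendsto_const_nhds hrt
      · exact Eventually.of_forall fun m => (hb m s j).2.1
      · filter_upwards [eventually_ge_atTop (p + 1)] with m hm
        exact (key m hm s).2
end
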